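/- Let C be a nonempty (n,d,w) constant-weight code with d even and d < 2w ≤ n, and let H = {d/2, …, w}. Suppose i ≠ j are in H with m_{i,j} < d, and let P_i, P_j be integers with P_i ≥ T(i,w,i,n−w,d) and P_j ≥ T(j,w,j,n−w,d). Then for each c ∈ C, |S_{2i}(c)|/P_i + |S_{2j}(c)|/P_j ≤ 1. -/

import Mathlib

/-- The number of ones of a binary vector. -/
def wtOnes {n : ℕ} (u : Fin n → ZMod 2) : ℕ :=
  (Finset.univ.filter (fun t => u t = 1)).card

/-- `C` is an `(n,d,w)` constant-weight binary code. -/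
def IsCWCode (n d w : ℕ) (C : Finset (Fin n → ZMod 2)) : Prop :=
  (∀ c ∈ C, wtOnes c = w) ∧
  ∀ u ∈ C, ∀ v ∈ C, u ≠ v → d ≤ hammingDist u v

/-- `A n d w`: the largest possible size of an `(n,d,w)` constant-weight code. -/
noncomputable def A (n d w : ℕ) : ℕ :=
  sSup {M | ∃ C : Finset (Fin n → ZMod 2), IsCWCode n d w C ∧ C.card = M}

/-- `C` is a `(w1,n1,w2,n2,d)` doubly-constant-weight binary code. -/
def IsDCWCode (w1 n1 w2 n2 d : ℕ) (C : Finset (Fin n1 ⊕ Fin n2 → ZMod 2)) : Prop :=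
  (∀ c ∈ C,
    (Finset.univ.filter (fun t : Fin n1 => c (Sum.inl t) = 1)).card = w1 ∧
    (Finset.univ.filter (fun t : Fin n2 => c (Sum.inr t) = 1)).card = w2) ∧
  ∀ u ∈ C, ∀ v ∈ C, u ≠ v → d ≤ hammingDist u v

/-- `T w1 n1 w2 n2 d`: the largest possible size of a `(w1,n1,w2,n2,d)`
doubly-constant-weight code. -/
noncomputable def T (w1 n1 w2 n2 d : ℕ) : ℕ :=
  sSup {M | ∃ C : Finset (Fin n1 ⊕ Fin n2 → ZMod 2), IsDCWCode w1 n1 w2 n2 d C ∧ C.card = M}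

/-- `S_i(c)`: the set of codewords of `C` at distance `i` from `c`. -/
def Sdist {n : ℕ} (C : Finset (Fin n → ZMod 2)) (c : Fin n → ZMod 2) (i : ℕ) :
    Finset (Fin n → ZMod 2) :=
  C.filter (fun u => hammingDist u c = i)

/-- The distance distribution `A_i = (1/|C|) ∑_{c ∈ C} |S_i(c)|` of a code `C`. -/
noncomputable def distDistr {n : ℕ} (C : Finset (Fin n → ZMod 2)) (i : ℕ) : ℚ :=
  (∑ c ∈ C, ((Sdist C c i).card : ℚ)) / (C.card : ℚ)

/-- `V_i`: vectors of `F^n` with exactly `i` ones on the first `w` coordinates and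
exactly `i` ones on the last `n - w` coordinates. -/
def Vset (n w i : ℕ) : Finset (Fin n → ZMod 2) :=
  Finset.univ.filter (fun u =>
    (Finset.univ.filter (fun t : Fin n => t.val < w ∧ u t = 1)).card = i ∧
    (Finset.univ.filter (fun t : Fin n => w ≤ t.val ∧ u t = 1)).card = i)

/-- `m_{i,j} = max { d(u,v) : u ∈ V_i, v ∈ V_j }`. -/
def mMax (n w i j : ℕ) : ℕ :=
  ((Vset n w i) ×ˢ (Vset n w j)).sup fun p => hammingDist p.1 p.2

/-- `P⁻_k(n;x) = ∑_{j odd} C(x,j) C(n-x,k-j)`. -/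
def Pminus (k n x : ℕ) : ℕ :=
  ∑ j ∈ Finset.range (k + 1), if Odd j then x.choose j * (n - x).choose (k - j) else 0

/-- `P⁺_k(n;x) = ∑_{j even} C(x,j) C(n-x,k-j)`. -/
def Pplus (k n x : ℕ) : ℕ :=
  ∑ j ∈ Finset.range (k + 1), if Even j then x.choose j * (n - x).choose (k - j) else 0

/-- The Krawtchouk polynomial `P_k(n;x) = ∑_j (-1)^j C(x,j) C(n-x,k-j)` at integer points. -/
def Kraw (k n x : ℕ) : ℤ :=
  ∑ j ∈ Finset.range (k + 1), (-1 : ℤ) ^ j * x.choose j * (n - x).choose (k - j)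

open Finset

lemma count_halves {n w i : ℕ} (u c : Fin n → ZMod 2) (hu : wtOnes u = w) (hc : wtOnes c = w)
    (hdist : hammingDist u c = 2 * i) :
    (Finset.univ.filter (fun t => c t = 1 ∧ u t + c t = 1)).card = i ∧
    (Finset.univ.filter (fun t => ¬ c t = 1 ∧ u t + c t = 1)).card = i := by
  set A := Finset.univ.filter (fun t => c t = 1 ∧ u t + c t = 1) with hA
  set A' := Finset.univ.filter (fun t => c t = 1 ∧ ¬ (u t + c t = 1)) with hA'
  set B := Finset.univ.filter (fun t => ¬ c t = 1 ∧ u t + c t = 1) with hB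
  have h1 : A.card + A'.card = w := by
    have hsplit : A ∪ A' = Finset.univ.filter (fun t => c t = 1) := by
      ext t
      simp only [hA, hA', mem_union, mem_filter, mem_univ, true_and]
      tauto
    have hdis : Disjoint A A' := by
      rw [Finset.disjoint_left]
      intro t ht ht'
      simp only [hA, hA', mem_filter] at ht ht'
      exact ht'.2.2 ht.2.2
    rw [← Finset.card_union_of_disjoint hdis, hsplit]
    exact hc
  have h2 : A'.card + B.card = w := by
    have hsplit : A' ∪ B = Finset.univ.filter (fun t => u t = 1) := by
      ext t
      simp only [hA', hB, mem_union, mem_filter, mem_univ, true_and]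
      have : ∀ a b : ZMod 2, ((b = 1 ∧ ¬ a + b = 1) ∨ (¬ b = 1 ∧ a + b = 1)) ↔ a = 1 := by decide
      exact this (u t) (c t)
    have hdis : Disjoint A' B := by
      rw [Finset.disjoint_left]
      intro t ht ht'
      simp only [hA', hB, mem_filter] at ht ht'
      exact ht'.2.1 ht.2.1
    rw [← Finset.card_union_of_disjoint hdis, hsplit]
    exact hu
  have h3 : A.card + B.card = 2 * i := by
    have hsplit : A ∪ B = Finset.univ.filter (fun t => u t ≠ c t) := by
      ext t
      simp only [hA, hB, mem_union, mem_filter, mem_univ, true_and]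
      have : ∀ a b : ZMod 2, ((b = 1 ∧ a + b = 1) ∨ (¬ b = 1 ∧ a + b = 1)) ↔ a ≠ b := by decide
      exact this (u t) (c t)
    have hdis : Disjoint A B := by
      rw [Finset.disjoint_left]
      intro t ht ht'
      simp only [hA, hB, mem_filter] at ht ht'
      exact ht'.2.1 ht.2.1
    rw [← Finset.card_union_of_disjoint hdis, hsplit]
    exact hdist
  omega

lemma hd_conj {α : Type*} [Fintype α] [DecidableEq α] {n : ℕ} (e : α ≃ Fin n)
    (x y z : Fin n → ZMod 2) :
    hammingDist (fun s => x (e s) + z (e s)) (fun s => y (e s) + z (e s)) = hammingDist x y := by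
  unfold hammingDist
  exact Finset.card_equiv e (by simp [add_left_inj])

lemma master {n d w i : ℕ} {C : Finset (Fin n → ZMod 2)}
    (hcode : IsCWCode n d w C) (hwn : w + (n - w) = n) {c : Fin n → ZMod 2} (hc : c ∈ C)
    (e : Fin w ⊕ Fin (n - w) ≃ Fin n)
    (he1 : ∀ a, c (e (Sum.inl a)) = 1) (he2 : ∀ b, ¬ c (e (Sum.inr b)) = 1) :
    (Sdist C c (2 * i)).card ≤ T i w i (n - w) d ∧
    ∀ u ∈ Sdist C c (2 * i),
      (fun t => u (((finSumFinEquiv.trans (finCongr hwn)).symm.trans e) t)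
        + c (((finSumFinEquiv.trans (finCongr hwn)).symm.trans e) t)) ∈ Vset n w i := by
  have hmemS : ∀ u ∈ Sdist C c (2 * i), u ∈ C ∧ hammingDist u c = 2 * i := by
    intro u hu
    exact Finset.mem_filter.1 hu
  -- image counts
  have himg1 : ∀ x : Fin n → ZMod 2,
      (Finset.univ.filter (fun t : Fin w => x (e (Sum.inl t)) + c (e (Sum.inl t)) = 1)).card
        = (Finset.univ.filter (fun s => c s = 1 ∧ x s + c s = 1)).card := by
    intro x
    apply Finset.card_bij (fun a _ => e (Sum.inl a))
    · intro a ha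
      simp only [mem_filter, mem_univ, true_and] at ha ⊢
      exact ⟨he1 a, ha⟩
    · intro a _ b _ hab
      have := e.injective hab
      exact Sum.inl_injective this
    · intro s hs
      simp only [mem_filter, mem_univ, true_and] at hs
      rcases hq : e.symm s with a | b
      · refine ⟨a, ?_, ?_⟩
        · have hes : e (Sum.inl a) = s := by rw [← hq]; simp
          simp only [mem_filter, mem_univ, true_and, hes]
          exact hs.2
        · rw [← hq]; simp
      · exfalso
        have hes : e (Sum.inr b) = s := by rw [← hq]; simp
        exact he2 b (hes ▸ hs.1)
  have himg2 : ∀ x : Fin n → ZMod 2,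
      (Finset.univ.filter (fun t : Fin (n - w) => x (e (Sum.inr t)) + c (e (Sum.inr t)) = 1)).card
        = (Finset.univ.filter (fun s => ¬ c s = 1 ∧ x s + c s = 1)).card := by
    intro x
    apply Finset.card_bij (fun a _ => e (Sum.inr a))
    · intro a ha
      simp only [mem_filter, mem_univ, true_and] at ha ⊢
      exact ⟨he2 a, ha⟩
    · intro a _ b _ hab
      have := e.injective hab
      exact Sum.inr_injective this
    · intro s hs
      simp only [mem_filter, mem_univ, true_and] at hs
      rcases hq : e.symm s with a | b
      · exfalso
        have hes : e (Sum.inl a) = s := by rw [← hq]; simp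
        exact hs.1 (hes ▸ he1 a)
      · refine ⟨b, ?_, ?_⟩
        · have hes : e (Sum.inr b) = s := by rw [← hq]; simp
          simp only [mem_filter, mem_univ, true_and, hes]
          exact hs.2
        · rw [← hq]; simp
  constructor
  · -- T bound
    have hΨinj : Function.Injective
        (fun (u : Fin n → ZMod 2) (s : Fin w ⊕ Fin (n - w)) => u (e s) + c (e s)) := by
      intro u v h
      funext t
      have := congrFun h (e.symm t)
      simpa using this
    have hD : IsDCWCode i w i (n - w) d
        ((Sdist C c (2 * i)).image
          (fun (u : Fin n → ZMod 2) (s : Fin w ⊕ Fin (n - w)) => u (e s) + c (e s))) := by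
      constructor
      · intro x hx
        obtain ⟨u, hu, rfl⟩ := Finset.mem_image.1 hx
        obtain ⟨huC, hud⟩ := hmemS u hu
        obtain ⟨h1, h2⟩ := count_halves u c (hcode.1 u huC) (hcode.1 c hc) hud
        exact ⟨(himg1 u).trans h1, (himg2 u).trans h2⟩
      · intro x hx y hy hxy
        obtain ⟨u, hu, rfl⟩ := Finset.mem_image.1 hx
        obtain ⟨v, hv, rfl⟩ := Finset.mem_image.1 hy
        have huv : u ≠ v := fun h => hxy (by rw [h])
        have hd := hcode.2 u (hmemS u hu).1 v (hmemS v hv).1 huv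
        calc d ≤ hammingDist u v := hd
          _ = _ := (hd_conj e u v c).symm
    have hcardim : ((Sdist C c (2 * i)).image
        (fun (u : Fin n → ZMod 2) (s : Fin w ⊕ Fin (n - w)) => u (e s) + c (e s))).card
        = (Sdist C c (2 * i)).card := Finset.card_image_of_injective _ hΨinj
    have hbdd : BddAbove {M | ∃ D : Finset (Fin w ⊕ Fin (n - w) → ZMod 2),
        IsDCWCode i w i (n - w) d D ∧ D.card = M} := by
      refine ⟨Fintype.card (Fin w ⊕ Fin (n - w) → ZMod 2), ?_⟩
      rintro M ⟨D, _, rfl⟩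
      exact Finset.card_le_univ D
    have := le_csSup hbdd (⟨_, hD, hcardim⟩ : (Sdist C c (2 * i)).card ∈
      {M | ∃ D : Finset (Fin w ⊕ Fin (n - w) → ZMod 2),
        IsDCWCode i w i (n - w) d D ∧ D.card = M})
    exact this
  · -- Vset membership
    intro u hu
    obtain ⟨huC, hud⟩ := hmemS u hu
    obtain ⟨h1, h2⟩ := count_halves u c (hcode.1 u huC) (hcode.1 c hc) hud
    set f : Fin w ⊕ Fin (n - w) ≃ Fin n := finSumFinEquiv.trans (finCongr hwn) with hf
    have hfl : ∀ a : Fin w, ((f (Sum.inl a)) : ℕ) = a := by intro a; simp [hf]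
    have hfr : ∀ b : Fin (n - w), ((f (Sum.inr b)) : ℕ) = w + b := by intro b; simp [hf]
    simp only [Vset, mem_filter, mem_univ, true_and, Equiv.trans_apply]
    constructor
    · rw [← h1]
      apply Finset.card_bij (fun t _ => e (f.symm t))
      · intro t ht
        simp only [mem_filter, mem_univ, true_and] at ht ⊢
        rcases hq : f.symm t with a | b
        · exact ⟨he1 a, hq ▸ ht.2⟩
        · exfalso
          have : t = f (Sum.inr b) := by rw [← hq]; simp
          have := this ▸ ht.1
          rw [hfr b] at this
          omega
      · intro a _ b _ hab
        exact f.symm.injective (e.injective hab)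
      · intro s hs
        simp only [mem_filter, mem_univ, true_and] at hs
        rcases hq : e.symm s with a | b
        · have hes : e (Sum.inl a) = s := by rw [← hq]; simp
          refine ⟨f (Sum.inl a), ?_, ?_⟩
          · simp only [mem_filter, mem_univ, true_and, Equiv.symm_apply_apply, hes]
            exact ⟨by rw [hfl a]; exact a.isLt, hs.2⟩
          · simp [hes]
        · exfalso
          have hes : e (Sum.inr b) = s := by rw [← hq]; simp
          exact he2 b (hes ▸ hs.1)
    · rw [← h2]
      apply Finset.card_bij (fun t _ => e (f.symm t))
      · intro t ht
        simp only [mem_filter, mem_univ, true_and] at ht ⊢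
        rcases hq : f.symm t with a | b
        · exfalso
          have : t = f (Sum.inl a) := by rw [← hq]; simp
          have := this ▸ ht.1
          rw [hfl a] at this
          have := a.isLt
          omega
        · exact ⟨he2 b, hq ▸ ht.2⟩
      · intro a _ b _ hab
        exact f.symm.injective (e.injective hab)
      · intro s hs
        simp only [mem_filter, mem_univ, true_and] at hs
        rcases hq : e.symm s with a | b
        · exfalso
          have hes : e (Sum.inl a) = s := by rw [← hq]; simp
          exact hs.1 (hes ▸ he1 a)
        · have hes : e (Sum.inr b) = s := by rw [← hq]; simp
          refine ⟨f (Sum.inr b), ?_, ?_⟩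
          · simp only [mem_filter, mem_univ, true_and, Equiv.symm_apply_apply, hes]
            exact ⟨by rw [hfr b]; omega, hs.2⟩
          · simp [hes]

/-- For a nonempty `(n,d,w)` constant-weight code `C` (`d` even,
`d < 2w ≤ n`), `i ≠ j` in `H` with `m_{i,j} < d`, and integers
`P_i ≥ T(i,w,i,n-w,d)`, `P_j ≥ T(j,w,j,n-w,d)`, every `c ∈ C` satisfies
`|S_{2i}(c)|/P_i + |S_{2j}(c)|/P_j ≤ 1`. -/
theorem Sdist_pair_bound (n d w i j : ℕ) (C : Finset (Fin n → ZMod 2)) (hC : C.Nonempty)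
    (hcode : IsCWCode n d w C) (hd : Even d) (hdw : d < 2 * w) (hwn : 2 * w ≤ n)
    (hi : i ∈ Finset.Icc (d / 2) w) (hj : j ∈ Finset.Icc (d / 2) w) (hij : i ≠ j)
    (hm : mMax n w i j < d)
    (Pi Pj : ℤ) (hPi : (T i w i (n - w) d : ℤ) ≤ Pi) (hPj : (T j w j (n - w) d : ℤ) ≤ Pj)
    (c : Fin n → ZMod 2) (hc : c ∈ C) :
    ((Sdist C c (2 * i)).card : ℚ) / (Pi : ℚ) +
      ((Sdist C c (2 * j)).card : ℚ) / (Pj : ℚ) ≤ 1 := by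

  have hwn' : w + (n - w) = n := by omega
  -- construct the coordinate equivalence adapted to the support of c
  have hcard1 : Fintype.card {x : Fin n // c x = 1} = w := by
    rw [Fintype.card_subtype]
    exact hcode.1 c hc
  have hcard2 : Fintype.card {x : Fin n // ¬ c x = 1} = n - w := by
    rw [Fintype.card_subtype_compl, Fintype.card_fin, hcard1]
  obtain ⟨e, he1, he2⟩ : ∃ e : Fin w ⊕ Fin (n - w) ≃ Fin n,
      (∀ a, c (e (Sum.inl a)) = 1) ∧ (∀ b, ¬ c (e (Sum.inr b)) = 1) := by
    refine ⟨(Equiv.sumCongr (Fintype.equivFinOfCardEq hcard1).symm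
      (Fintype.equivFinOfCardEq hcard2).symm).trans (Equiv.sumCompl (fun x => c x = 1)),
      fun a => ?_, fun b => ?_⟩
    · simp only [Equiv.trans_apply, Equiv.sumCongr_apply, Sum.map_inl,
        Equiv.sumCompl_apply_inl]
      exact ((Fintype.equivFinOfCardEq hcard1).symm a).2
    · simp only [Equiv.trans_apply, Equiv.sumCongr_apply, Sum.map_inr,
        Equiv.sumCompl_apply_inr]
      exact ((Fintype.equivFinOfCardEq hcard2).symm b).2
  have Mi := master (i := i) hcode hwn' hc e he1 he2
  have Mj := master (i := j) hcode hwn' hc e he1 he2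
  -- at least one of the two sets is empty
  have hkey : Sdist C c (2 * i) = ∅ ∨ Sdist C c (2 * j) = ∅ := by
    by_contra hcon
    push_neg at hcon
    obtain ⟨u, hu⟩ := hcon.1
    obtain ⟨v, hv⟩ := hcon.2
    have hxu := Mi.2 u hu
    have hxv := Mj.2 v hv
    have hle := Finset.le_sup
      (f := fun p : (Fin n → ZMod 2) × (Fin n → ZMod 2) => hammingDist p.1 p.2)
      (Finset.mk_mem_product hxu hxv)
    have heq := hd_conj ((finSumFinEquiv.trans (finCongr hwn')).symm.trans e) u v c
    have hmm : hammingDist u v ≤ mMax n w i j := by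
      rw [← heq]
      exact hle
    have huv : u ≠ v := by
      intro h
      have h1 := (Finset.mem_filter.1 hu).2
      have h2 := (Finset.mem_filter.1 hv).2
      rw [h] at h1
      rw [h1] at h2
      omega
    have hdle := hcode.2 u (Finset.mem_filter.1 hu).1 v (Finset.mem_filter.1 hv).1 huv
    omega
  -- division bound helper
  have hfrac : ∀ (S : Finset (Fin n → ZMod 2)) (Tn : ℕ) (P : ℤ),
      S.card ≤ Tn → (Tn : ℤ) ≤ P → ((S.card : ℚ)) / (P : ℚ) ≤ 1 := by
    intro S Tn P h1 h2
    rcases S.eq_empty_or_nonempty with rfl | hne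
    · simp
    · have h3 : 1 ≤ S.card := Finset.card_pos.2 hne
      have hP : (1 : ℤ) ≤ P := le_trans (by exact_mod_cast le_trans h3 h1) h2
      have hP' : (0 : ℚ) < (P : ℚ) := by exact_mod_cast lt_of_lt_of_le one_pos hP
      rw [div_le_one hP']
      have hcP : (S.card : ℤ) ≤ P := le_trans (by exact_mod_cast h1) h2
      exact_mod_cast hcP
  rcases hkey with h0 | h0
  · rw [h0]
    simp only [Finset.card_empty, Nat.cast_zero, zero_div, zero_add]
    exact hfrac _ _ _ Mj.1 hPj
  · rw [h0]
    simp only [Finset.card_empty, Nat.cast_zero, zero_div, add_zero]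
    exact hfrac _ _ _ Mi.1 hPi
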